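/- If x* is a local weak Pareto optimum of min (f₁,...,f_m) with each f_i continuously differentiable, then x* is Pareto critical: there exists θ in the unit simplex Δ^m with Σ_i θ_i ∇f_i(x*) = 0. -/

import Mathlib

open InnerProductSpace Topology Filter

theorem stmt_3 (n m : ℕ) (f : Fin (m + 1) → EuclideanSpace ℝ (Fin n) → ℝ)
    (hf : ∀ i, ContDiff ℝ 1 (f i)) (xstar : EuclideanSpace ℝ (Fin n))
    (hx : ∃ U ∈ nhds xstar, ¬ ∃ y ∈ U, ∀ i, f i y < f i xstar) :
    ∃ θ : Fin (m + 1) → ℝ, (∀ i, 0 ≤ θ i) ∧ (∑ i, θ i = 1) ∧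
      ∑ i, θ i • gradient (f i) xstar = 0 := by
  set g : Fin (m + 1) → EuclideanSpace ℝ (Fin n) := fun i => gradient (f i) xstar with hg
  set T : (Fin (m + 1) → ℝ) → EuclideanSpace ℝ (Fin n) := fun θ => ∑ i, θ i • g i with hT
  set K : Set (EuclideanSpace ℝ (Fin n)) := T '' stdSimplex ℝ (Fin (m + 1)) with hK
  by_cases h0 : (0 : EuclideanSpace ℝ (Fin n)) ∈ K
  · obtain ⟨θ, hθ, hθ0⟩ := h0
    exact ⟨θ, hθ.1, hθ.2, hθ0⟩
  · exfalso
    -- K is compact and convex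
    have hTcont : Continuous T := by
      apply continuous_finset_sum
      intro i _
      exact (continuous_apply i).smul continuous_const
    have hKcomp : IsCompact K := (isCompact_stdSimplex ℝ (Fin (m + 1))).image hTcont
    have hTlin : IsLinearMap ℝ T := by
      constructor
      · intro a b; simp [hT, add_smul, Finset.sum_add_distrib]
      · intro c a; simp [hT, Finset.smul_sum, smul_smul]
    have hKconv : Convex ℝ K := (convex_stdSimplex ℝ _).is_linear_image hTlin
    obtain ⟨φ, u, hφK, hφ0⟩ :=
      geometric_hahn_banach_closed_point hKconv hKcomp.isClosed h0
    simp only [map_zero] at hφ0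
    -- each g i ∈ K, so φ (g i) < u < 0
    have hgK : ∀ i, g i ∈ K := by
      intro i
      refine ⟨fun j => if i = j then (1 : ℝ) else 0, ite_eq_mem_stdSimplex ℝ i, ?_⟩
      simp [hT, ite_smul]
    have hφg : ∀ i, φ (g i) < u := fun i => hφK _ (hgK i)
    -- descent direction
    set d : EuclideanSpace ℝ (Fin n) := (toDual ℝ (EuclideanSpace ℝ (Fin n))).symm φ with hd
    have hinner : ∀ i, ⟪g i, d⟫_ℝ = φ (g i) := by
      intro i; rw [real_inner_comm]; exact toDual_symm_apply
    -- directional derivatives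
    have hderiv : ∀ i, HasDerivAt (fun t : ℝ => f i (xstar + t • d)) (φ (g i)) 0 := by
      intro i
      have hfd : HasFDerivAt (f i) (fderiv ℝ (f i) xstar) xstar :=
        ((hf i).differentiable one_ne_zero xstar).hasFDerivAt
      have hline : HasDerivAt (fun t : ℝ => xstar + t • d) d 0 := by
        simpa using ((hasDerivAt_id (0:ℝ)).smul_const d).const_add xstar
      have hfd' : HasFDerivAt (f i) (fderiv ℝ (f i) xstar)
          ((fun t : ℝ => xstar + t • d) 0) := by simpa using hfd
      have hcomp := hfd'.comp_hasDerivAt (0:ℝ) hline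
      have hval : fderiv ℝ (f i) xstar d = φ (g i) := by
        rw [← hinner i]
        have h2 : (toDual ℝ (EuclideanSpace ℝ (Fin n))) (g i) = fderiv ℝ (f i) xstar := by
          simp [hg, gradient]
        rw [← h2]; rfl
      rw [hval] at hcomp
      exact hcomp
    obtain ⟨U, hU, hUnot⟩ := hx
    -- for t > 0 small, all f i decrease
    have hsmall : ∀ i, ∀ᶠ t : ℝ in 𝓝[>] 0, f i (xstar + t • d) < f i xstar := by
      intro i
      have hslope := hasDerivAt_iff_tendsto_slope.mp (hderiv i)
      have hneg : φ (g i) < 0 := (hφg i).trans hφ0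
      have hev : ∀ᶠ t in 𝓝[≠] (0:ℝ), slope (fun t : ℝ => f i (xstar + t • d)) 0 t < 0 :=
        hslope (Iio_mem_nhds hneg)
      have hev' : ∀ᶠ t in 𝓝[>] (0:ℝ), slope (fun t : ℝ => f i (xstar + t • d)) 0 t < 0 :=
        hev.filter_mono (nhdsWithin_mono _ (fun t ht => ne_of_gt ht))
      filter_upwards [hev', self_mem_nhdsWithin] with t ht ht0'
      have ht0 : (0:ℝ) < t := ht0'
      have hsl : (f i (xstar + t • d) - f i (xstar + (0:ℝ) • d)) / (t - 0) < 0 := by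
        simpa [slope_def_field, div_eq_inv_mul] using ht
      simp only [zero_smul, add_zero, sub_zero] at hsl
      by_contra hcon
      push_neg at hcon
      exact absurd hsl (not_lt.mpr (div_nonneg (by linarith) ht0.le))
    -- the curve enters U
    have hcurve : ∀ᶠ t : ℝ in 𝓝[>] 0, xstar + t • d ∈ U := by
      have hc : ContinuousAt (fun t : ℝ => xstar + t • d) 0 := by
        fun_prop
      have hev : ∀ᶠ t : ℝ in 𝓝 0, xstar + t • d ∈ U :=
        hc.preimage_mem_nhds (by simpa using hU)
      exact hev.filter_mono nhdsWithin_le_nhds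
    have hall : ∀ᶠ t : ℝ in 𝓝[>] 0,
        (xstar + t • d ∈ U ∧ ∀ i, f i (xstar + t • d) < f i xstar) := by
      filter_upwards [hcurve, eventually_all.mpr hsmall] with t h1 h2
      exact ⟨h1, h2⟩
    obtain ⟨t, htU, hti⟩ := hall.exists
    exact hUnot ⟨xstar + t • d, htU, hti⟩
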